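/- arXiv:1401.6783 — 2 statements merged into one kernel-verified Lean document; each statement's English description precedes it below -/
import Mathlib

section
/- For every z > 0, the function R(z) = √(2π) exp(−z) z^{z+1/2} / Γ(z+1) satisfies R(z) < 1, R is strictly increasing on (0,∞), and R(z) → 1 as z → ∞. -/
open Real Filter

noncomputable def stirlingR (z : ℝ) : ℝ :=
  Real.sqrt (2 * Real.pi) * Real.exp (-z) * z ^ (z + 1 / 2) / Real.Gamma (z + 1)

open Set Topology


lemma aux_log_lt_half (x : ℝ) (hx : 1 < x) : Real.log x < (x - x⁻¹) / 2 := by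
  have key : StrictMonoOn (fun t : ℝ => (t - t⁻¹) / 2 - Real.log t) (Ici 1) := by
    apply strictMonoOn_of_deriv_pos (convex_Ici 1)
    · apply continuousOn_of_forall_continuousAt
      intro t ht
      have ht0 : t ≠ 0 := by simp at ht; positivity
      exact (((continuousAt_id.sub (continuousAt_inv₀ ht0)).div_const 2).sub
        (Real.continuousAt_log ht0))
    · intro t ht
      rw [interior_Ici] at ht
      have ht1 : (1:ℝ) < t := ht
      have ht0 : t ≠ 0 := by positivity
      have h : HasDerivAt (fun t : ℝ => (t - t⁻¹) / 2 - Real.log t)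
          ((1 - (-(t^2)⁻¹)) / 2 - t⁻¹) t :=
        (((hasDerivAt_id t).sub (hasDerivAt_inv ht0)).div_const 2).sub
          (Real.hasDerivAt_log ht0)
      rw [h.deriv]
      have htm : (0:ℝ) < t - 1 := by linarith
      have : (1 - (-(t^2)⁻¹)) / 2 - t⁻¹ = (t-1)^2 / (2*t^2) := by
        field_simp; ring
      rw [this]
      exact div_pos (pow_pos htm 2) (by positivity)
  have := key (self_mem_Ici) (le_of_lt hx) hx
  simp at this
  linarith

lemma aux_lt_log (x : ℝ) (hx : 1 < x) : 2 * (x - 1) / (x + 1) < Real.log x := by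
  have key : StrictMonoOn (fun t : ℝ => Real.log t - 2 * (t - 1) / (t + 1)) (Ici 1) := by
    apply strictMonoOn_of_deriv_pos (convex_Ici 1)
    · apply continuousOn_of_forall_continuousAt
      intro t ht
      simp only [mem_Ici] at ht
      have ht0 : t ≠ 0 := by positivity
      have ht1' : t + 1 ≠ 0 := by positivity
      exact (Real.continuousAt_log ht0).sub
        ((((continuousAt_id.sub continuousAt_const).const_mul 2)).div
          (continuousAt_id.add continuousAt_const) ht1')
    · intro t ht
      rw [interior_Ici] at ht
      have ht1 : (1:ℝ) < t := ht
      have ht0 : t ≠ 0 := by positivity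
      have ht1' : t + 1 ≠ 0 := by positivity
      have h : HasDerivAt (fun t : ℝ => Real.log t - 2 * (t - 1) / (t + 1))
          (t⁻¹ - (2 * (t+1) - 2*(t-1)*1)/(t+1)^2) t := by
        refine (Real.hasDerivAt_log ht0).sub ?_
        have h1 : HasDerivAt (fun t : ℝ => 2 * (t - 1)) 2 t := by
          simpa using (((hasDerivAt_id t).sub_const 1).const_mul 2)
        have h2 : HasDerivAt (fun t : ℝ => t + 1) 1 t := (hasDerivAt_id t).add_const 1
        simpa using (show HasDerivAt (fun t : ℝ => 2 * (t - 1) / (t + 1)) ((2 * (t + 1) - 2 * (t - 1) * 1) / (t + 1) ^ 2) t from h1.div h2 ht1')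
      rw [h.deriv]
      have htm : (0:ℝ) < t - 1 := by linarith
      have : t⁻¹ - (2 * (t+1) - 2*(t-1)*1)/(t+1)^2 = (t-1)^2 / (t*(t+1)^2) := by
        field_simp; ring
      rw [this]
      exact div_pos (pow_pos htm 2) (by positivity)
  have := key (self_mem_Ici) (le_of_lt hx) hx
  simp at this
  linarith
noncomputable def fS (z : ℝ) : ℝ :=
  Real.log (Real.sqrt (2 * Real.pi)) - z + (z + 1/2) * Real.log z
    - Real.log (Real.Gamma (z + 1))

noncomputable def gS (z : ℝ) : ℝ := (z + 1/2) * (Real.log (z+1) - Real.log z) - 1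

lemma stirlingR_eq_exp {z : ℝ} (hz : 0 < z) :
    Real.sqrt (2 * Real.pi) * Real.exp (-z) * z ^ (z + 1 / 2) / Real.Gamma (z + 1)
      = Real.exp (fS z) := by
  have hG : 0 < Real.Gamma (z + 1) := Real.Gamma_pos_of_pos (by linarith)
  have hs : (0:ℝ) < Real.sqrt (2 * Real.pi) := Real.sqrt_pos.2 (by positivity)
  have hrp : (0:ℝ) < z ^ (z + 1/2 : ℝ) := Real.rpow_pos_of_pos hz _
  have hpos : 0 < Real.sqrt (2 * Real.pi) * Real.exp (-z) * z ^ (z + 1/2 : ℝ)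
      / Real.Gamma (z + 1) := by positivity
  rw [← Real.exp_log hpos]
  congr 1
  rw [Real.log_div (by positivity) (ne_of_gt hG),
    Real.log_mul (by positivity) (ne_of_gt hrp),
    Real.log_mul (ne_of_gt hs) (Real.exp_ne_zero _), Real.log_exp,
    Real.log_rpow hz, fS]
  ring

lemma fS_add_one {z : ℝ} (hz : 0 < z) : fS (z + 1) = fS z + gS z := by
  have hz1 : (0:ℝ) < z + 1 := by linarith
  have hG : 0 < Real.Gamma (z + 1) := Real.Gamma_pos_of_pos hz1
  have hGam : Real.Gamma (z + 1 + 1) = (z+1) * Real.Gamma (z + 1) :=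
    Real.Gamma_add_one (by positivity)
  rw [fS, fS, gS, hGam, Real.log_mul (by positivity) (ne_of_gt hG)]
  ring

lemma gS_pos {z : ℝ} (hz : 0 < z) : 0 < gS z := by
  have hx : 1 < (z+1)/z := by rw [lt_div_iff₀ hz]; linarith
  have h := aux_lt_log _ hx
  rw [Real.log_div (by positivity) (ne_of_gt hz)] at h
  have he : 2 * ((z+1)/z - 1) / ((z+1)/z + 1) = 1 / (z + 1/2) := by
    field_simp; ring
  rw [he] at h
  rw [gS, sub_pos]
  rw [div_lt_iff₀ (by positivity)] at h
  linarith [h]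

lemma gS_anti : StrictAntiOn gS (Ioi (0:ℝ)) := by
  apply strictAntiOn_of_deriv_neg (convex_Ioi 0)
  · apply continuousOn_of_forall_continuousAt
    intro t ht
    simp only [mem_Ioi] at ht
    unfold gS
    exact ((continuousAt_id.add continuousAt_const).mul
      (((continuousAt_id.add continuousAt_const).log (by show t + 1 ≠ 0; positivity)).sub
        (continuousAt_id.log (ne_of_gt ht)))).sub continuousAt_const
  · intro t ht
    rw [interior_Ioi] at ht
    have ht0 : (0:ℝ) < t := ht
    have h1 : HasDerivAt (fun t : ℝ => t + 1/2) 1 t := (hasDerivAt_id t).add_const _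
    have h2 : HasDerivAt (fun t : ℝ => Real.log (t+1) - Real.log t)
        ((t+1)⁻¹ - t⁻¹) t := by
      refine HasDerivAt.sub ?_ (Real.hasDerivAt_log (ne_of_gt ht0))
      have := (Real.hasDerivAt_log (by positivity : t + 1 ≠ 0)).comp t
        ((hasDerivAt_id t).add_const 1)
      simpa [Function.comp_def] using this
    have h : HasDerivAt gS
        (1 * (Real.log (t+1) - Real.log t) + (t + 1/2) * ((t+1)⁻¹ - t⁻¹)) t := by
      unfold gS; exact (h1.mul h2).sub_const 1
    rw [h.deriv]
    have hx : 1 < (t+1)/t := by rw [lt_div_iff₀ ht0]; linarith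
    have hlog := aux_log_lt_half _ hx
    rw [Real.log_div (by positivity) (ne_of_gt ht0)] at hlog
    have he : ((t+1)/t - ((t+1)/t)⁻¹)/2 = (2*t+1)/(2*t*(t+1)) := by
      rw [inv_div]
      field_simp; ring
    rw [he] at hlog
    have he2 : (t + 1/2) * ((t+1)⁻¹ - t⁻¹) = -((2*t+1)/(2*t*(t+1))) := by
      field_simp; ring
    rw [he2]
    linarith
lemma exp_fS_nat {n : ℕ} (hn : 0 < n) :
    Real.exp (fS n) = Real.sqrt Real.pi / Stirling.stirlingSeq n := by
  have hn0 : (0:ℝ) < n := Nat.cast_pos.2 hn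
  rw [← stirlingR_eq_exp hn0, Stirling.stirlingSeq]
  rw [Real.Gamma_nat_eq_factorial]
  have hfac : (0:ℝ) < ((n.factorial : ℕ) : ℝ) := by positivity
  have hrp : (n:ℝ) ^ ((n:ℝ) + 1/2) = n^n * Real.sqrt n := by
    rw [Real.rpow_add hn0, Real.rpow_natCast, ← Real.sqrt_eq_rpow]
  have hsq : Real.sqrt (2 * Real.pi) = Real.sqrt 2 * Real.sqrt Real.pi :=
    Real.sqrt_mul (by norm_num) _
  have hsq2 : Real.sqrt (2 * (n:ℝ)) = Real.sqrt 2 * Real.sqrt n :=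
    Real.sqrt_mul (by norm_num) _
  have hpow : ((n:ℝ) / Real.exp 1) ^ n = (n:ℝ)^n * Real.exp (-(n:ℝ)) := by
    rw [div_pow, Real.exp_one_pow, Real.exp_neg]
    ring
  rw [hrp, hsq, hsq2, hpow, div_div_eq_mul_div]
  ring

lemma tendsto_fS_nat : Tendsto (fun n : ℕ => fS n) atTop (𝓝 0) := by
  have hπ : (0:ℝ) < Real.sqrt Real.pi := Real.sqrt_pos.2 Real.pi_pos
  have hdiv : Tendsto (fun n : ℕ => Real.sqrt Real.pi / Stirling.stirlingSeq n)
      atTop (𝓝 1) := by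
    have := (tendsto_const_nhds (x := Real.sqrt Real.pi) (f := (atTop : Filter ℕ))).div
      Stirling.tendsto_stirlingSeq_sqrt_pi (ne_of_gt hπ)
    rw [div_self (ne_of_gt hπ)] at this
    exact this
  have hexp : Tendsto (fun n : ℕ => Real.exp (fS n)) atTop (𝓝 1) := by
    apply hdiv.congr'
    filter_upwards [eventually_gt_atTop 0] with n hn
    exact (exp_fS_nat hn).symm
  have hlog : Tendsto (fun n : ℕ => Real.log (Real.exp (fS n))) atTop (𝓝 (Real.log 1)) :=
    ((Real.continuousAt_log one_ne_zero).tendsto.comp hexp)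
  simpa [Real.log_exp] using hlog
set_option maxHeartbeats 1000000 in
lemma fS_sub_floor {z : ℝ} (hz : 1 ≤ z) :
    |fS z - fS (⌊z⌋₊ : ℝ)| ≤ 3 / (⌊z⌋₊ : ℝ) := by
  obtain ⟨n, hn⟩ : ∃ n : ℕ, (n:ℕ) = ⌊z⌋₊ := ⟨_, rfl⟩
  rw [← hn]
  have hz0 : (0:ℝ) < z := by linarith
  have hn1 : 1 ≤ n := hn ▸ Nat.le_floor (by exact_mod_cast hz)
  have hnr : (1:ℝ) ≤ (n:ℝ) := by exact_mod_cast hn1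
  have hn0 : (0:ℝ) < (n:ℝ) := by linarith
  have hnz : (n:ℝ) ≤ z := hn ▸ Nat.floor_le (le_of_lt hz0)
  have hzn1 : z < (n:ℝ) + 1 := hn ▸ Nat.lt_floor_add_one z
  obtain ⟨θ, hθ⟩ : ∃ θ : ℝ, θ = z - (n:ℝ) := ⟨_, rfl⟩
  have hθ0 : 0 ≤ θ := by rw [hθ]; linarith
  have hθ1 : θ < 1 := by rw [hθ]; linarith
  have hzeq : (n:ℝ) + θ = z := by rw [hθ]; ring
  have hΓz : 0 < Real.Gamma (z + 1) := Real.Gamma_pos_of_pos (by linarith)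
  have hΓn : 0 < Real.Gamma ((n:ℝ) + 1) := Real.Gamma_pos_of_pos (by linarith)
  have hΓn' : 0 < Real.Gamma (n:ℝ) := Real.Gamma_pos_of_pos hn0
  obtain ⟨A, hA⟩ : ∃ A : ℝ, A = Real.log (Real.Gamma (n:ℝ)) := ⟨_, rfl⟩
  obtain ⟨B, hB⟩ : ∃ B : ℝ, B = Real.log (Real.Gamma ((n:ℝ) + 1)) := ⟨_, rfl⟩
  obtain ⟨C, hC⟩ : ∃ C : ℝ, C = Real.log (Real.Gamma (z + 1)) := ⟨_, rfl⟩
  obtain ⟨lz, hlz⟩ : ∃ lz : ℝ, lz = Real.log z := ⟨_, rfl⟩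
  obtain ⟨ln, hln⟩ : ∃ ln : ℝ, ln = Real.log (n:ℝ) := ⟨_, rfl⟩
  have hcv := Real.convexOn_log_Gamma
  have hBA : B = A + ln := by
    rw [hB, hA, hln, Real.Gamma_add_one (ne_of_gt hn0),
      Real.log_mul (ne_of_gt hn0) (ne_of_gt hΓn')]
    ring
  -- upper bound on C - B
  have hL_up : C - B ≤ θ * Real.log ((n:ℝ) + 1) := by
    have harg : (1-θ) • ((n:ℝ)+1) + θ • ((n:ℝ)+2) = z + 1 := by
      simp only [smul_eq_mul]; rw [hθ]; ring
    have h := hcv.2 (show ((n:ℝ)+1) ∈ Set.Ioi (0:ℝ) by simp; linarith)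
      (show ((n:ℝ)+2) ∈ Set.Ioi (0:ℝ) by simp; linarith)
      (show (0:ℝ) ≤ 1 - θ by linarith) hθ0 (by ring)
    rw [harg] at h
    simp only [Function.comp, smul_eq_mul] at h
    have hΓ2 : Real.Gamma ((n:ℝ)+2) = ((n:ℝ)+1) * Real.Gamma ((n:ℝ)+1) := by
      rw [show ((n:ℝ)+2) = ((n:ℝ)+1) + 1 by ring, Real.Gamma_add_one (by linarith)]
    rw [hΓ2, Real.log_mul (by linarith) (ne_of_gt hΓn)] at h
    rw [hC, hB]
    nlinarith [h]
  -- lower bound on C - B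
  have hL_lo : θ * ln ≤ C - B := by
    have h1θ : (0:ℝ) < 1 + θ := by linarith
    have harg : (θ/(1+θ)) • (n:ℝ) + (1/(1+θ)) • (z+1) = (n:ℝ) + 1 := by
      simp only [smul_eq_mul]
      rw [div_mul_eq_mul_div, div_mul_eq_mul_div, ← add_div,
        div_eq_iff (ne_of_gt h1θ), hθ]
      ring
    have hsum : θ/(1+θ) + 1/(1+θ) = 1 := by
      rw [← add_div, show θ + 1 = 1 + θ from add_comm θ 1,
        div_self (ne_of_gt h1θ)]
    have h := hcv.2 (show ((n:ℝ)) ∈ Set.Ioi (0:ℝ) by simpa using hn0)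
      (show (z+1) ∈ Set.Ioi (0:ℝ) by simp; linarith)
      (show (0:ℝ) ≤ θ/(1+θ) by positivity)
      (show (0:ℝ) ≤ 1/(1+θ) by positivity) hsum
    rw [harg] at h
    simp only [Function.comp, smul_eq_mul] at h
    rw [← hA, ← hB, ← hC] at h
    rw [div_mul_eq_mul_div, div_mul_eq_mul_div, ← add_div, le_div_iff₀ h1θ] at h
    have hlnBA : ln = B - A := by rw [hBA]; ring
    rw [hlnBA]
    nlinarith [h]
  -- log bounds
  have hlog_up : lz - ln ≤ θ / n := by
    have h := Real.log_le_sub_one_of_pos (show (0:ℝ) < z / n by positivity)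
    rw [Real.log_div (ne_of_gt hz0) (ne_of_gt hn0), ← hlz, ← hln] at h
    have he : z / (n:ℝ) - 1 = θ / n := by
      rw [hθ]; field_simp
    rw [he] at h
    exact h
  have hlog_lo : θ / z ≤ lz - ln := by
    have h := Real.log_le_sub_one_of_pos (show (0:ℝ) < (n:ℝ) / z by positivity)
    rw [Real.log_div (ne_of_gt hn0) (ne_of_gt hz0), ← hlz, ← hln] at h
    have he : (n:ℝ) / z - 1 = -(θ / z) := by
      rw [hθ]; field_simp; ring
    rw [he] at h
    linarith
  have hlog_n1 : Real.log ((n:ℝ)+1) ≤ ln + 1/n := by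
    have h := Real.log_le_sub_one_of_pos (show (0:ℝ) < ((n:ℝ)+1) / n by positivity)
    rw [Real.log_div (by linarith) (ne_of_gt hn0), ← hln] at h
    have he : ((n:ℝ)+1) / n - 1 = 1 / n := by field_simp; ring
    rw [he] at h
    linarith
  -- main expression
  have hE : fS z - fS (n:ℝ) = ((n:ℝ)+θ+1/2) * (lz - ln) + θ * ln - θ - (C - B) := by
    rw [fS, fS, ← hC, ← hB, ← hlz, ← hln, hθ]
    ring
  rw [abs_le]
  constructor
  · -- lower bound
    have t1 : ((n:ℝ)+θ+1/2)*(θ/z) ≤ ((n:ℝ)+θ+1/2)*(lz-ln) :=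
      mul_le_mul_of_nonneg_left hlog_lo (by linarith)
    have t2 : ((n:ℝ)+θ+1/2)*(θ/z) = θ + θ/(2*z) := by
      rw [show (n:ℝ)+θ+1/2 = z + 1/2 from by rw [← hzeq]]
      field_simp
    have t3 : (0:ℝ) ≤ θ/(2*z) := by positivity
    have t4 : θ * Real.log ((n:ℝ)+1) ≤ θ * (ln + 1/n) :=
      mul_le_mul_of_nonneg_left hlog_n1 hθ0
    have t5 : θ * (ln + 1/n) = θ * ln + θ/n := by ring
    have t6 : θ/n ≤ 3/n := (div_le_div_iff_of_pos_right hn0).mpr (by linarith)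
    linarith only [hE, t1, t2, t3, t4, t5, t6, hL_up]
  · -- upper bound
    have t1 : ((n:ℝ)+θ+1/2) * (lz - ln) ≤ ((n:ℝ)+θ+1/2) * (θ/n) :=
      mul_le_mul_of_nonneg_left hlog_up (by linarith)
    have t2 : ((n:ℝ)+θ+1/2) * (θ/n) - θ = (θ+1/2)*θ/n := by
      field_simp; ring
    have h33 : (θ + 1/2) * θ ≤ 3 := by nlinarith
    have t3 : (θ+1/2)*θ/n ≤ 3/n := (div_le_div_iff_of_pos_right hn0).mpr h33
    linarith only [hE, t1, t2, t3, hL_lo]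
lemma tendsto_fS : Tendsto fS atTop (𝓝 0) := by
  have hfloor : Tendsto (fun z : ℝ => (⌊z⌋₊ : ℕ)) atTop atTop :=
    tendsto_nat_floor_atTop
  have h2 : Tendsto (fun z : ℝ => fS (⌊z⌋₊ : ℝ)) atTop (𝓝 0) :=
    tendsto_fS_nat.comp hfloor
  have hcast : Tendsto (fun z : ℝ => ((⌊z⌋₊ : ℕ) : ℝ)) atTop atTop :=
    tendsto_natCast_atTop_atTop.comp hfloor
  have h3 : Tendsto (fun z : ℝ => 3 / ((⌊z⌋₊ : ℕ) : ℝ)) atTop (𝓝 0) :=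
    tendsto_const_nhds.div_atTop hcast
  have hlo : Tendsto (fun z : ℝ => fS (⌊z⌋₊ : ℝ) - 3 / ((⌊z⌋₊:ℕ):ℝ)) atTop (𝓝 0) := by
    simpa using h2.sub h3
  have hhi : Tendsto (fun z : ℝ => fS (⌊z⌋₊ : ℝ) + 3 / ((⌊z⌋₊:ℕ):ℝ)) atTop (𝓝 0) := by
    simpa using h2.add h3
  refine tendsto_of_tendsto_of_tendsto_of_le_of_le' hlo hhi ?_ ?_
  · filter_upwards [eventually_ge_atTop (1:ℝ)] with z hz
    have := (abs_le.1 (fS_sub_floor hz)).1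
    linarith
  · filter_upwards [eventually_ge_atTop (1:ℝ)] with z hz
    have := (abs_le.1 (fS_sub_floor hz)).2
    linarith

lemma tendsto_fS_shift (z : ℝ) : Tendsto (fun n : ℕ => fS (z + n)) atTop (𝓝 0) := by
  apply tendsto_fS.comp
  exact tendsto_atTop_add_const_left _ z tendsto_natCast_atTop_atTop

lemma fS_neg {z : ℝ} (hz : 0 < z) : fS z < 0 := by
  have hmono : Monotone (fun n : ℕ => fS (z + 1 + n)) := by
    apply monotone_nat_of_le_succ
    intro n
    have h : fS (z + 1 + n + 1) = fS (z + 1 + n) + gS (z + 1 + n) :=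
      fS_add_one (by positivity)
    have hg : 0 < gS (z + 1 + n) := gS_pos (by positivity)
    have : (z + 1 + (n+1:ℕ) : ℝ) = z + 1 + n + 1 := by push_cast; ring
    rw [this, h]
    linarith
  have hlim : Tendsto (fun n : ℕ => fS (z + 1 + n)) atTop (𝓝 0) :=
    tendsto_fS_shift (z + 1)
  have h1 : fS (z + 1) ≤ 0 := by
    have := hmono.ge_of_tendsto hlim 0
    simpa using this
  have h2 : fS (z + 1) = fS z + gS z := fS_add_one hz
  have := gS_pos hz
  linarith

lemma fS_strictMonoOn : StrictMonoOn fS (Set.Ioi (0:ℝ)) := by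
  intro x hx y hy hxy
  simp only [Set.mem_Ioi] at hx hy
  have hanti : Antitone (fun n : ℕ => fS (y + n) - fS (x + n)) := by
    apply antitone_nat_of_succ_le
    intro n
    have hx' : (0:ℝ) < x + n := by positivity
    have hy' : (0:ℝ) < y + n := by positivity
    have hgx : fS (x + n + 1) = fS (x + n) + gS (x + n) := fS_add_one hx'
    have hgy : fS (y + n + 1) = fS (y + n) + gS (y + n) := fS_add_one hy'
    have hlt : gS (y + n) < gS (x + n) :=
      gS_anti (Set.mem_Ioi.2 hx') (Set.mem_Ioi.2 hy') (by linarith)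
    have hcx : (x + (n+1:ℕ) : ℝ) = x + n + 1 := by push_cast; ring
    have hcy : (y + (n+1:ℕ) : ℝ) = y + n + 1 := by push_cast; ring
    rw [hcx, hcy, hgx, hgy]
    linarith
  have hlim : Tendsto (fun n : ℕ => fS (y + n) - fS (x + n)) atTop (𝓝 0) := by
    simpa using (tendsto_fS_shift y).sub (tendsto_fS_shift x)
  have h1 : 0 ≤ fS (y + 1) - fS (x + 1) := by
    have := hanti.le_of_tendsto hlim 1
    simpa using this
  have hgx : fS (x + 1) = fS x + gS x := fS_add_one hx
  have hgy : fS (y + 1) = fS y + gS y := fS_add_one hy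
  have hlt : gS y < gS x := gS_anti (Set.mem_Ioi.2 hx) (Set.mem_Ioi.2 hy) hxy
  linarith

theorem stirlingR_lt_one_strictMono_tendsto' :
    (∀ z > (0 : ℝ), Real.sqrt (2 * Real.pi) * Real.exp (-z) * z ^ (z + 1 / 2) / Real.Gamma (z + 1) < 1) ∧
    StrictMonoOn (fun z : ℝ => Real.sqrt (2 * Real.pi) * Real.exp (-z) * z ^ (z + 1 / 2) / Real.Gamma (z + 1)) (Set.Ioi (0 : ℝ)) ∧
    Tendsto (fun z : ℝ => Real.sqrt (2 * Real.pi) * Real.exp (-z) * z ^ (z + 1 / 2) / Real.Gamma (z + 1)) atTop (𝓝 1) := by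
  refine ⟨?_, ?_, ?_⟩
  · intro z hz
    rw [stirlingR_eq_exp hz]
    calc Real.exp (fS z) < Real.exp 0 := Real.exp_lt_exp.2 (fS_neg hz)
    _ = 1 := Real.exp_zero
  · intro x hx y hy hxy
    simp only []
    beta_reduce
    rw [stirlingR_eq_exp (Set.mem_Ioi.1 hx), stirlingR_eq_exp (Set.mem_Ioi.1 hy)]
    exact Real.exp_lt_exp.2 (fS_strictMonoOn hx hy hxy)
  · have : Tendsto (fun z : ℝ => Real.exp (fS z)) atTop (𝓝 1) := by
      have := (Real.continuous_exp.tendsto 0).comp tendsto_fS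
      simpa [Function.comp_def] using this
    apply this.congr'
    filter_upwards [eventually_gt_atTop (0:ℝ)] with z hz
    exact (stirlingR_eq_exp hz).symm

theorem stirlingR_lt_one_strictMono_tendsto :
    (∀ z > (0 : ℝ), stirlingR z < 1) ∧
    StrictMonoOn stirlingR (Set.Ioi (0 : ℝ)) ∧
    Tendsto stirlingR atTop (nhds 1) := by
  unfold stirlingR
  exact stirlingR_lt_one_strictMono_tendsto'
end

section
/- Let ξ_b be a Gamma random variable with shape x/b and scale b for fixed x > 0, and f : (0,∞) → ℝ a C² function with bounded second derivative. Then E[f(ξ_b)] = f(x) + (xb/2) f''(x) + o(b) as b → 0⁺. -/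
open MeasureTheory Real Filter Asymptotics Set

noncomputable def gammaKernel (ρ b t : ℝ) : ℝ :=
  t ^ (ρ - 1) * Real.exp (-t / b) / (b ^ ρ * Real.Gamma ρ)

lemma integrableOn_rpow_exp {s b : ℝ} (hs : 0 < s) (hb : 0 < b) :
    IntegrableOn (fun t : ℝ => t ^ (s - 1) * Real.exp (-t / b)) (Set.Ioi 0) := by
  have h := integrableOn_rpow_mul_exp_neg_mul_rpow (p := 1) (s := s - 1) (b := 1 / b)
    (by linarith) one_pos (by positivity)
  refine IntegrableOn.congr_fun h (fun t ht => ?_) measurableSet_Ioi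
  rw [Real.rpow_one]
  ring_nf

lemma integral_rpow_exp {s b : ℝ} (hs : 0 < s) (hb : 0 < b) :
    ∫ t in Set.Ioi (0:ℝ), t ^ (s - 1) * Real.exp (-t / b) = b ^ s * Real.Gamma s := by
  have h := Real.integral_rpow_mul_exp_neg_mul_Ioi hs (show (0:ℝ) < 1 / b by positivity)
  rw [show ((1:ℝ) / (1 / b)) = b by field_simp] at h
  rw [← h]
  refine setIntegral_congr_fun measurableSet_Ioi (fun t ht => ?_)
  rw [show -t / b = -(1 / b * t) by ring]

lemma pointwise_kernel {ρ b : ℝ} (hρ : 0 < ρ) (hb : 0 < b) (m : ℕ) {t : ℝ} (ht : 0 < t) :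
    t ^ m * gammaKernel ρ b t
      = (b ^ ρ * Real.Gamma ρ)⁻¹ * (t ^ (ρ + m - 1) * Real.exp (-t / b)) := by
  have h1 : t ^ (ρ + (m:ℝ) - 1) = t ^ m * t ^ (ρ - 1) := by
    rw [← Real.rpow_natCast t m, ← Real.rpow_add ht]
    ring_nf
  rw [gammaKernel, h1]
  ring

lemma integrableOn_pow_gammaKernel {ρ b : ℝ} (hρ : 0 < ρ) (hb : 0 < b) (m : ℕ) :
    IntegrableOn (fun t : ℝ => t ^ m * gammaKernel ρ b t) (Set.Ioi 0) := by
  have h := (integrableOn_rpow_exp (s := ρ + m) (by positivity) hb).const_mul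
    ((b ^ ρ * Real.Gamma ρ)⁻¹)
  refine IntegrableOn.congr_fun h (fun t ht => ?_) measurableSet_Ioi
  exact (pointwise_kernel hρ hb m ht).symm

lemma integral_pow_gammaKernel {ρ b : ℝ} (hρ : 0 < ρ) (hb : 0 < b) (m : ℕ) :
    ∫ t in Set.Ioi (0:ℝ), t ^ m * gammaKernel ρ b t
      = b ^ m * (Real.Gamma (ρ + m) / Real.Gamma ρ) := by
  have key : ∫ t in Set.Ioi (0:ℝ), t ^ m * gammaKernel ρ b t
      = (b ^ ρ * Real.Gamma ρ)⁻¹ * ∫ t in Set.Ioi (0:ℝ), t ^ (ρ + m - 1) * Real.exp (-t / b) := by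
    rw [← integral_const_mul]
    exact setIntegral_congr_fun measurableSet_Ioi (fun t ht => pointwise_kernel hρ hb m ht)
  rw [key, integral_rpow_exp (by positivity) hb, Real.rpow_add hb, Real.rpow_natCast]
  have h1 : b ^ ρ ≠ 0 := (Real.rpow_pos_of_pos hb ρ).ne'
  have h2 : Real.Gamma ρ ≠ 0 := (Real.Gamma_pos_of_pos hρ).ne'
  field_simp

lemma Gamma_add_nat (ρ : ℝ) (hρ : 0 < ρ) (m : ℕ) :
    Real.Gamma (ρ + m) = Real.Gamma ρ * ∏ i ∈ Finset.range m, (ρ + i) := by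
  induction m with
  | zero => simp
  | succ n ih =>
    have h : ρ + ((n+1 : ℕ) : ℝ) = (ρ + n) + 1 := by push_cast; ring
    rw [h, Real.Gamma_add_one (by positivity : (0:ℝ) < ρ + n).ne', ih, Finset.prod_range_succ]
    ring

lemma integral_pow_gammaKernel' {x b : ℝ} (hx : 0 < x) (hb : 0 < b) (m : ℕ) :
    ∫ t in Set.Ioi (0:ℝ), t ^ m * gammaKernel (x / b) b t
      = ∏ i ∈ Finset.range m, (x + i * b) := by
  have hρ : 0 < x / b := by positivity
  rw [integral_pow_gammaKernel hρ hb, Gamma_add_nat _ hρ,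
    mul_div_cancel_left₀ _ (Real.Gamma_pos_of_pos hρ).ne']
  calc b ^ m * ∏ i ∈ Finset.range m, (x / b + i)
      = ∏ i ∈ Finset.range m, (b * (x / b + i)) := by
        rw [Finset.prod_mul_distrib, Finset.prod_const, Finset.card_range]
    _ = ∏ i ∈ Finset.range m, (x + i * b) := by
        refine Finset.prod_congr rfl (fun i _ => ?_)
        field_simp

lemma integrable_poly_gammaKernel {x b : ℝ} (hx : 0 < x) (hb : 0 < b) (c0 c1 c2 c3 c4 : ℝ) :
    IntegrableOn (fun t : ℝ =>
      (c0 + c1 * t + c2 * t ^ 2 + c3 * t ^ 3 + c4 * t ^ 4) * gammaKernel (x / b) b t)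
      (Set.Ioi 0) := by
  have hρ : 0 < x / b := by positivity
  have A : ∀ (m : ℕ) (c : ℝ), IntegrableOn (fun t : ℝ => c * (t ^ m * gammaKernel (x / b) b t))
      (Set.Ioi 0) := fun m c => (integrableOn_pow_gammaKernel hρ hb m).const_mul c
  have h := ((((A 0 c0).add (A 1 c1)).add (A 2 c2)).add (A 3 c3)).add (A 4 c4)
  refine IntegrableOn.congr_fun h (fun t _ => ?_) measurableSet_Ioi
  simp only [Pi.add_apply]
  ring

lemma integral_poly_gammaKernel {x b : ℝ} (hx : 0 < x) (hb : 0 < b) (c0 c1 c2 c3 c4 : ℝ) :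
    ∫ t in Set.Ioi (0:ℝ),
        (c0 + c1 * t + c2 * t ^ 2 + c3 * t ^ 3 + c4 * t ^ 4) * gammaKernel (x / b) b t
      = c0 + c1 * x + c2 * (x * (x + b)) + c3 * (x * (x + b) * (x + 2 * b))
          + c4 * (x * (x + b) * (x + 2 * b) * (x + 3 * b)) := by
  have hρ : 0 < x / b := by positivity
  have A : ∀ (m : ℕ) (c : ℝ), Integrable (fun t : ℝ => c * (t ^ m * gammaKernel (x / b) b t))
      (volume.restrict (Set.Ioi 0)) := fun m c => (integrableOn_pow_gammaKernel hρ hb m).const_mul c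
  have expand : (fun t : ℝ =>
      (c0 + c1 * t + c2 * t ^ 2 + c3 * t ^ 3 + c4 * t ^ 4) * gammaKernel (x / b) b t)
      = fun t : ℝ => c0 * (t ^ 0 * gammaKernel (x / b) b t) + c1 * (t ^ 1 * gammaKernel (x / b) b t)
        + c2 * (t ^ 2 * gammaKernel (x / b) b t) + c3 * (t ^ 3 * gammaKernel (x / b) b t)
        + c4 * (t ^ 4 * gammaKernel (x / b) b t) := by
    funext t; ring
  rw [expand, integral_add, integral_add, integral_add, integral_add]
  · simp only [integral_const_mul]
    rw [integral_pow_gammaKernel' hx hb 0, integral_pow_gammaKernel' hx hb 1,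
      integral_pow_gammaKernel' hx hb 2, integral_pow_gammaKernel' hx hb 3,
      integral_pow_gammaKernel' hx hb 4]
    simp only [Finset.prod_range_succ, Finset.prod_range_zero, pow_zero, pow_one]
    push_cast
    ring
  · exact A 0 c0
  · exact A 1 c1
  · exact (A 0 c0).add (A 1 c1)
  · exact A 2 c2
  · exact ((A 0 c0).add (A 1 c1)).add (A 2 c2)
  · exact A 3 c3
  · exact (((A 0 c0).add (A 1 c1)).add (A 2 c2)).add (A 3 c3)
  · exact A 4 c4

lemma abs_sub_le_of_mem_uIcc {x t s : ℝ} (hs : s ∈ Set.uIcc x t) : |s - x| ≤ |t - x| := by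
  rcases le_total x t with h | h
  · rw [Set.uIcc_of_le h] at hs
    rw [abs_of_nonneg (by linarith [hs.1]), abs_of_nonneg (by linarith)]
    linarith [hs.2]
  · rw [Set.uIcc_of_ge h] at hs
    rw [abs_of_nonpos (by linarith [hs.2]), abs_of_nonpos (by linarith)]
    linarith [hs.1]

lemma taylor_bd {f : ℝ → ℝ} (hf : ContDiff ℝ 2 f) (x t C : ℝ)
    (hC : ∀ s ∈ Set.uIcc x t, |iteratedDeriv 2 f s - iteratedDeriv 2 f x| ≤ C) :
    |f t - (f x + deriv f x * (t - x) + iteratedDeriv 2 f x / 2 * (t - x) ^ 2)|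
      ≤ C * (t - x) ^ 2 := by
  have hd1 : Differentiable ℝ f := hf.differentiable (by norm_num)
  have hd2 : Differentiable ℝ (deriv f) := by
    have := hf.differentiable_iteratedDeriv 1 (by norm_num)
    rwa [iteratedDeriv_one] at this
  have heq2 : iteratedDeriv 2 f = deriv (deriv f) := by
    rw [show (2:ℕ) = 1 + 1 from rfl, iteratedDeriv_succ, iteratedDeriv_one]
  set A := iteratedDeriv 2 f x with hA
  -- step 1 : bound on deriv f s - deriv f x - A * (s - x)
  have step1 : ∀ s ∈ Set.uIcc x t, |deriv f s - deriv f x - A * (s - x)| ≤ C * |t - x| := by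
    intro s hs
    have hφ : ∀ u ∈ Set.uIcc x t, HasDerivWithinAt (fun u => deriv f u - A * u)
        (iteratedDeriv 2 f u - A) (Set.uIcc x t) u := by
      intro u _
      have h1 : HasDerivAt (deriv f) (iteratedDeriv 2 f u) u := by
        rw [heq2]; exact (hd2 u).hasDerivAt
      exact ((h1.sub ((hasDerivAt_id u).const_mul A)).congr_deriv (by ring)).hasDerivWithinAt
    have hb : ∀ u ∈ Set.uIcc x t, ‖iteratedDeriv 2 f u - A‖ ≤ C := fun u hu => hC u hu
    have := (convex_uIcc x t).norm_image_sub_le_of_norm_hasDerivWithin_le hφ hb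
      Set.left_mem_uIcc hs
    have h2 : |s - x| ≤ |t - x| := abs_sub_le_of_mem_uIcc hs
    have hC0 : 0 ≤ C := le_trans (abs_nonneg _) (hC x Set.left_mem_uIcc)
    calc |deriv f s - deriv f x - A * (s - x)|
        = ‖(deriv f s - A * s) - (deriv f x - A * x)‖ := by rw [Real.norm_eq_abs]; ring_nf
      _ ≤ C * ‖s - x‖ := this
      _ ≤ C * |t - x| := by rw [Real.norm_eq_abs]; exact mul_le_mul_of_nonneg_left h2 hC0
  -- step 2
  have hψ : ∀ u ∈ Set.uIcc x t, HasDerivWithinAt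
      (fun u => f u - (f x + deriv f x * (u - x) + A / 2 * (u - x) ^ 2))
      (deriv f u - deriv f x - A * (u - x)) (Set.uIcc x t) u := by
    intro u _
    have h1 : HasDerivAt f (deriv f u) u := (hd1 u).hasDerivAt
    have h2 : HasDerivAt (fun u : ℝ => u - x) 1 u := (hasDerivAt_id u).sub_const x
    have h3 : HasDerivAt (fun u : ℝ => f x + deriv f x * (u - x) + A / 2 * (u - x) ^ 2)
        (deriv f x + A * (u - x)) u := by
      have := ((hasDerivAt_const u (f x)).fun_add ((h2.const_mul (deriv f x)))).fun_add
        ((h2.fun_pow 2).const_mul (A / 2))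
      exact this.congr_deriv (by norm_num; ring)
    exact ((h1.sub h3).congr_deriv (by ring)).hasDerivWithinAt
  have := (convex_uIcc x t).norm_image_sub_le_of_norm_hasDerivWithin_le hψ
    (fun u hu => step1 u hu) Set.left_mem_uIcc Set.right_mem_uIcc
  simp only [sub_self, mul_zero, ne_eq, OfNat.ofNat_ne_zero, not_false_eq_true, zero_pow,
    add_zero, sub_zero, Real.norm_eq_abs] at this
  calc |f t - (f x + deriv f x * (t - x) + A / 2 * (t - x) ^ 2)|
      ≤ C * |t - x| * |t - x| := by
        have h := this
        convert h using 2 <;> ring_nf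
      _ = C * (t - x) ^ 2 := by rw [mul_assoc, abs_mul_abs_self]; ring_nf

lemma final_arith {C x b c K : ℝ} (hC0 : 0 ≤ C) (hx : 0 < x) (hb0 : 0 < b) (hc : 0 < c)
    (hK : K = C * (3 * x ^ 2 + 6 * x) + 1) (hb1 : b ≤ 1) (hb2 : b ≤ c / (2 * K)) :
    C * (3 * x ^ 2 * b ^ 2 + 6 * x * b ^ 3) ≤ c * b / 2 := by
  have hK0 : 0 < K := by nlinarith [mul_nonneg hC0 (by positivity : (0:ℝ) ≤ 3 * x ^ 2 + 6 * x)]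
  have h7 : C * (6 * x) * b ^ 2 * b ≤ C * (6 * x) * b ^ 2 * 1 :=
    mul_le_mul_of_nonneg_left hb1 (by positivity)
  have h6 : C * (3 * x ^ 2 * b ^ 2 + 6 * x * b ^ 3) ≤ K * b ^ 2 := by
    have e : K * b ^ 2 = C * (3 * x ^ 2) * b ^ 2 + C * (6 * x) * b ^ 2 * 1 + b ^ 2 := by
      rw [hK]; ring
    rw [e]
    nlinarith [sq_nonneg b]
  have h8 : K * b ^ 2 ≤ c * b / 2 := by
    calc K * b ^ 2 = (K * b) * b := by ring
      _ ≤ (K * b) * (c / (2 * K)) := mul_le_mul_of_nonneg_left hb2 (by positivity)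
      _ = c * b / 2 := by field_simp
  linarith

set_option maxHeartbeats 1000000 in
/-- For `ξ_b ∼ Gamma(x/b, b)`, `E[f(ξ_b)] = f(x) + (xb/2) f''(x) + o(b)` as `b → 0⁺`. -/
theorem gamma_expectation_expansion (x : ℝ) (hx : 0 < x) (f : ℝ → ℝ)
    (hf : ContDiff ℝ 2 f)
    (hbdd : ∃ M : ℝ, ∀ t : ℝ, |iteratedDeriv 2 f t| ≤ M) :
    (fun b : ℝ =>
        (∫ t in Set.Ioi (0 : ℝ), f t * gammaKernel (x / b) b t) -
          f x - x * b / 2 * iteratedDeriv 2 f x)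
      =o[nhdsWithin 0 (Set.Ioi 0)] fun b => b := by
  obtain ⟨M, hM⟩ := hbdd
  have hM0 : 0 ≤ M := le_trans (abs_nonneg _) (hM 0)
  rw [Asymptotics.isLittleO_iff]
  intro c hc
  have hε : 0 < c / (2 * x) := by positivity
  set ε := c / (2 * x) with hεdef
  have hcont : Continuous (iteratedDeriv 2 f) := hf.continuous_iteratedDeriv 2 le_rfl
  obtain ⟨δ, hδ0, hδ⟩ := Metric.continuousAt_iff.mp (hcont.continuousAt (x := x)) ε hε
  set δ' := δ / 2 with hδ'def
  have hδ'0 : 0 < δ' := by rw [hδ'def]; positivity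
  set C := 2 * M / δ' ^ 2 with hCdef
  have hC0 : 0 ≤ C := by rw [hCdef]; positivity
  set P : ℝ → ℝ := fun t => f x + deriv f x * (t - x) + iteratedDeriv 2 f x / 2 * (t - x) ^ 2
    with hPdef
  have hPcont : Continuous P := by rw [hPdef]; fun_prop
  -- pointwise Taylor-type bound
  have key : ∀ t : ℝ, |f t - P t| ≤ ε * (t - x) ^ 2 + C * (t - x) ^ 4 := by
    intro t
    simp only [hPdef]
    by_cases hcase : |t - x| ≤ δ'
    · have h1 : ∀ s ∈ Set.uIcc x t, |iteratedDeriv 2 f s - iteratedDeriv 2 f x| ≤ ε := by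
        intro s hs
        have h2 : |s - x| ≤ δ' := le_trans (abs_sub_le_of_mem_uIcc hs) hcase
        have h3 : dist s x < δ := by
          rw [Real.dist_eq]; rw [hδ'def] at h2; linarith
        have h4 := hδ h3
        rw [Real.dist_eq] at h4
        exact h4.le
      have h2 := taylor_bd hf x t ε h1
      have h3 : 0 ≤ C * (t - x) ^ 4 := mul_nonneg hC0 (by positivity)
      linarith
    · push_neg at hcase
      have h1 : ∀ s ∈ Set.uIcc x t, |iteratedDeriv 2 f s - iteratedDeriv 2 f x| ≤ 2 * M := by
        intro s _
        have h := abs_add_le (iteratedDeriv 2 f s) (-(iteratedDeriv 2 f x))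
        rw [abs_neg, ← sub_eq_add_neg] at h
        linarith [hM s, hM x]
      have h2 := taylor_bd hf x t (2 * M) h1
      have hu : δ' ^ 2 ≤ (t - x) ^ 2 := by
        have h5 := pow_le_pow_left₀ hδ'0.le hcase.le 2
        rwa [sq_abs] at h5
      have h3 : 2 * M * (t - x) ^ 2 ≤ C * (t - x) ^ 4 := by
        rw [hCdef, div_mul_eq_mul_div, le_div_iff₀ (by positivity)]
        have h4 := mul_le_mul_of_nonneg_left hu
          (show (0:ℝ) ≤ 2 * M * (t - x) ^ 2 by positivity)
        nlinarith [h4]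
      have h5 : 0 ≤ ε * (t - x) ^ 2 := mul_nonneg hε.le (sq_nonneg _)
      linarith
  -- constants
  set K := C * (3 * x ^ 2 + 6 * x) + 1 with hKdef
  have hK0 : 0 < K := by
    rw [hKdef]
    have : 0 ≤ C * (3 * x ^ 2 + 6 * x) := mul_nonneg hC0 (by positivity)
    linarith
  filter_upwards [Ioo_mem_nhdsGT
    (show (0:ℝ) < min 1 (c / (2 * K)) by positivity)] with b hb
  obtain ⟨hb0, hb1⟩ := hb
  have hble1 : b ≤ 1 := le_trans hb1.le (min_le_left _ _)
  have hble2 : b ≤ c / (2 * K) := le_trans hb1.le (min_le_right _ _)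
  have hρ : 0 < x / b := by positivity
  show ‖(∫ t in Set.Ioi (0:ℝ), f t * gammaKernel (x / b) b t) -
      f x - x * b / 2 * iteratedDeriv 2 f x‖ ≤ c * ‖b‖
  -- polynomial representations
  set c0 := f x - deriv f x * x + iteratedDeriv 2 f x / 2 * x ^ 2 with hc0
  set c1 := deriv f x - iteratedDeriv 2 f x * x with hc1
  set c2 := iteratedDeriv 2 f x / 2 with hc2
  have hPpoly : ∀ t : ℝ, P t = c0 + c1 * t + c2 * t ^ 2 + 0 * t ^ 3 + 0 * t ^ 4 := by
    intro t; simp only [hPdef]; rw [hc0, hc1, hc2]; ring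
  set d0 := ε * x ^ 2 + C * x ^ 4 with hd0
  set d1 := -(2 * ε * x) - 4 * C * x ^ 3 with hd1
  set d2 := ε + 6 * C * x ^ 2 with hd2
  set d3 := -(4 * C * x) with hd3
  have hBpoly : ∀ t : ℝ, ε * (t - x) ^ 2 + C * (t - x) ^ 4
      = d0 + d1 * t + d2 * t ^ 2 + d3 * t ^ 3 + C * t ^ 4 := by
    intro t; rw [hd0, hd1, hd2, hd3]; ring
  -- integrability
  have hPk_int : Integrable (fun t : ℝ => P t * gammaKernel (x / b) b t)
      (volume.restrict (Set.Ioi 0)) := by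
    refine IntegrableOn.congr_fun (integrable_poly_gammaKernel hx hb0 c0 c1 c2 0 0)
      (fun t _ => ?_) measurableSet_Ioi
    rw [hPpoly t]
  have hBk_int : Integrable (fun t : ℝ =>
      (ε * (t - x) ^ 2 + C * (t - x) ^ 4) * gammaKernel (x / b) b t)
      (volume.restrict (Set.Ioi 0)) := by
    refine IntegrableOn.congr_fun (integrable_poly_gammaKernel hx hb0 d0 d1 d2 d3 C)
      (fun t _ => ?_) measurableSet_Ioi
    rw [hBpoly t]
  have hk_meas : Measurable (fun t : ℝ => gammaKernel (x / b) b t) := by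
    unfold gammaKernel
    fun_prop
  have hknn : ∀ t ∈ Set.Ioi (0:ℝ), 0 ≤ gammaKernel (x / b) b t := by
    intro t ht
    unfold gammaKernel
    exact le_of_lt (div_pos (mul_pos (Real.rpow_pos_of_pos ht _) (Real.exp_pos _))
      (mul_pos (Real.rpow_pos_of_pos hb0 _) (Real.Gamma_pos_of_pos hρ)))
  have h_bound : ∀ᵐ t ∂(volume.restrict (Set.Ioi 0)),
      ‖(f t - P t) * gammaKernel (x / b) b t‖
        ≤ (ε * (t - x) ^ 2 + C * (t - x) ^ 4) * gammaKernel (x / b) b t := by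
    rw [ae_restrict_iff' measurableSet_Ioi]
    filter_upwards with t ht
    rw [Real.norm_eq_abs, abs_mul, abs_of_nonneg (hknn t ht)]
    exact mul_le_mul_of_nonneg_right (key t) (hknn t ht)
  have hgk_int : Integrable (fun t : ℝ => (f t - P t) * gammaKernel (x / b) b t)
      (volume.restrict (Set.Ioi 0)) :=
    hBk_int.mono' (((hf.continuous.sub hPcont).aestronglyMeasurable).mul
      hk_meas.aestronglyMeasurable) h_bound
  -- splitting the integral
  have efn : (fun t : ℝ => f t * gammaKernel (x / b) b t)
      = fun t : ℝ => P t * gammaKernel (x / b) b t + (f t - P t) * gammaKernel (x / b) b t :=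
    funext fun t => by ring
  have hsplit : ∫ t in Set.Ioi (0:ℝ), f t * gammaKernel (x / b) b t
      = (∫ t in Set.Ioi (0:ℝ), P t * gammaKernel (x / b) b t)
        + ∫ t in Set.Ioi (0:ℝ), (f t - P t) * gammaKernel (x / b) b t := by
    rw [efn]
    exact integral_add hPk_int hgk_int
  have hPval : ∫ t in Set.Ioi (0:ℝ), P t * gammaKernel (x / b) b t
      = f x + x * b / 2 * iteratedDeriv 2 f x := by
    have e : (fun t : ℝ => P t * gammaKernel (x / b) b t)
        = fun t : ℝ => (c0 + c1 * t + c2 * t ^ 2 + 0 * t ^ 3 + 0 * t ^ 4)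
          * gammaKernel (x / b) b t := funext fun t => by rw [hPpoly t]
    rw [e, integral_poly_gammaKernel hx hb0, hc0, hc1, hc2]
    ring
  have hBval : ∫ t in Set.Ioi (0:ℝ),
      (ε * (t - x) ^ 2 + C * (t - x) ^ 4) * gammaKernel (x / b) b t
      = ε * (x * b) + C * (3 * x ^ 2 * b ^ 2 + 6 * x * b ^ 3) := by
    have e : (fun t : ℝ => (ε * (t - x) ^ 2 + C * (t - x) ^ 4) * gammaKernel (x / b) b t)
        = fun t : ℝ => (d0 + d1 * t + d2 * t ^ 2 + d3 * t ^ 3 + C * t ^ 4)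
          * gammaKernel (x / b) b t := funext fun t => by rw [hBpoly t]
    rw [e, integral_poly_gammaKernel hx hb0, hd0, hd1, hd2, hd3]
    ring
  have hgk_bound : ‖∫ t in Set.Ioi (0:ℝ), (f t - P t) * gammaKernel (x / b) b t‖
      ≤ ε * (x * b) + C * (3 * x ^ 2 * b ^ 2 + 6 * x * b ^ 3) := by
    rw [← hBval]
    exact norm_integral_le_of_norm_le hBk_int h_bound
  have hre : (∫ t in Set.Ioi (0:ℝ), f t * gammaKernel (x / b) b t) -
      f x - x * b / 2 * iteratedDeriv 2 f x
      = ∫ t in Set.Ioi (0:ℝ), (f t - P t) * gammaKernel (x / b) b t := by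
    rw [hsplit, hPval]; ring
  rw [hre]
  have e1 : ε * (x * b) = c * b / 2 := by
    rw [hεdef]; field_simp
  have e2 : C * (3 * x ^ 2 * b ^ 2 + 6 * x * b ^ 3) ≤ c * b / 2 :=
    final_arith hC0 hx hb0 hc hKdef hble1 hble2
  calc ‖∫ t in Set.Ioi (0:ℝ), (f t - P t) * gammaKernel (x / b) b t‖
      ≤ ε * (x * b) + C * (3 * x ^ 2 * b ^ 2 + 6 * x * b ^ 3) := hgk_bound
    _ ≤ c * b / 2 + c * b / 2 := by rw [e1]; exact add_le_add le_rfl e2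
    _ = c * ‖b‖ := by rw [Real.norm_eq_abs, abs_of_pos hb0]; ring
end
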